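/- Perpetual Phragmén with lexicographic tie-breaking satisfies OIIA: removing a non-winning alternative from any voter's current-round approval set does not change the current-round winner. -/

import Mathlib

open scoped Classical

noncomputable section

/-- A one-round approval profile: each of the `n` voters approves a finite set of
alternatives (alternatives are natural numbers). -/
abbrev Profile (n : ℕ) := Fin n → Finset ℕ

/-- An online temporal voting rule: given the round index `t` and the (infinite
sequence of) approval profiles, it returns the winning alternative of round `t`.
Online rules only look at rounds `0,…,t`. -/
abbrev VRule (n : ℕ) := ℕ → (ℕ → Profile n) → ℕ

/-- Replace voter `i`'s approval set in round `t` by `S`, keeping everything else. -/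
def updateRound {n : ℕ} (A : ℕ → Profile n) (t : ℕ) (i : Fin n) (S : Finset ℕ) :
    ℕ → Profile n :=
  fun s => if s = t then Function.update (A s) i S else A s

/-- A rule is online if the round-`t` winner only depends on rounds `0,…,t`. -/
def OnlineRule {n : ℕ} (R : VRule n) : Prop :=
  ∀ (t : ℕ) (A B : ℕ → Profile n), (∀ s, s ≤ t → A s = B s) → R t A = R t B

/-- Monotonicity: if `c` wins round `t`, adding `c` to any voter's round-`t`
approval set keeps `c` the round-`t` winner. -/
def IsMonotone {n : ℕ} (R : VRule n) : Prop :=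
  ∀ (A : ℕ → Profile n) (t : ℕ) (i : Fin n),
    R t (updateRound A t i (A t i ∪ {R t A})) = R t A

/-- Online independence of irrelevant alternatives: removing a non-winning
alternative `d` from any single voter's round-`t` approvals keeps the winner. -/
def OIIA {n : ℕ} (R : VRule n) : Prop :=
  ∀ (A : ℕ → Profile n) (t : ℕ) (i : Fin n) (d : ℕ), d ≠ R t A →
    R t (updateRound A t i ((A t i).erase d)) = R t A

/-- Online strategyproofness: fixing previous rounds and the other voters, no
misreport `S` by voter `i` in round `t` can turn the round-`t` winner from a
(truthfully) unapproved alternative into an approved one. -/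
def OSP {n : ℕ} (R : VRule n) : Prop :=
  ∀ (A : ℕ → Profile n) (t : ℕ) (i : Fin n) (S : Finset ℕ),
    R t (updateRound A t i S) ∈ A t i → R t A ∈ A t i

/-- `B` deviates from `A` only in voter `i`'s reports. -/
def Deviation {n : ℕ} (i : Fin n) (A B : ℕ → Profile n) : Prop :=
  ∀ (t : ℕ) (j : Fin n), j ≠ i → B t j = A t j

/-- Satisfaction of the group `G` over rounds `0,…,T-1`: the number of rounds in
which the winner under the reported profile `B` is approved (in the reference,
e.g. truthful, profile `A`) by some member of `G`. -/
def satAgainst {n : ℕ} (R : VRule n) (B A : ℕ → Profile n) (T : ℕ)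
    (G : Finset (Fin n)) : ℕ :=
  ((Finset.range T).filter fun t => ∃ i ∈ G, R t B ∈ A t i).card

/-- (Full) strategyproofness: no unilateral misreport strictly increases a
voter's total satisfaction, measured against their truthful approvals. -/
def SP {n : ℕ} (R : VRule n) : Prop :=
  ∀ (A B : ℕ → Profile n) (i : Fin n) (T : ℕ), Deviation i A B →
    satAgainst R B A T {i} ≤ satAgainst R A A T {i}

/-- `G` is `ℓ`-cohesive in the first `T` rounds of `A`: in some `ℓ` rounds all
members of `G` approve a common alternative. -/
def Cohesive {n : ℕ} (A : ℕ → Profile n) (T : ℕ) (G : Finset (Fin n)) (ℓ : ℕ) : Prop :=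
  ∃ Rs : Finset ℕ, Rs ⊆ Finset.range T ∧ Rs.card = ℓ ∧
    ∀ t ∈ Rs, ∃ c, ∀ i ∈ G, c ∈ A t i

/-- Justified representation. -/
def SatisfiesJR {n : ℕ} (R : VRule n) : Prop :=
  ∀ (A : ℕ → Profile n) (T : ℕ) (G : Finset (Fin n)) (ℓ : ℕ),
    Cohesive A T G ℓ → min 1 (ℓ * G.card / n) ≤ satAgainst R A A T G

/-- Proportional justified representation. -/
def SatisfiesPJR {n : ℕ} (R : VRule n) : Prop :=
  ∀ (A : ℕ → Profile n) (T : ℕ) (G : Finset (Fin n)) (ℓ : ℕ),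
    Cohesive A T G ℓ → ℓ * G.card / n ≤ satAgainst R A A T G

end
noncomputable section

/-- Potential average load of group `S`: `(1 + Σ loads)/|S|`. -/
def ppPhi {n : ℕ} (lam : Fin n → ℝ) (S : Finset (Fin n)) : ℝ :=
  (1 + ∑ i ∈ S, lam i) / (S.card : ℝ)

/-- Encode a group of voters as a natural number (for lexicographic tie-breaking). -/
def ppEncode {n : ℕ} (S : Finset (Fin n)) : ℕ :=
  ∑ i ∈ S, 2 ^ (i : ℕ)

/-- The round-winning group of Perpetual Phragmén: among all nonempty groups with
a common approved alternative in `Ct`, one minimizing the potential average load,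
ties broken by the (injective) encoding. -/
def ppGroup {n : ℕ} (lam : Fin n → ℝ) (Ap : Profile n) (Ct : Finset ℕ) :
    Finset (Fin n) :=
  let cands : Finset (Finset (Fin n)) :=
    Finset.univ.filter fun S => S.Nonempty ∧ ∃ c ∈ Ct, ∀ i ∈ S, c ∈ Ap i
  let mins := cands.filter fun S => ∀ S' ∈ cands, ppPhi lam S ≤ ppPhi lam S'
  if h : mins.Nonempty then
    Finset.univ.filter fun i : Fin n =>
      ((mins.image ppEncode).min' (h.image _)).testBit (i : ℕ)
  else ∅

/-- The round winner: the lexicographically first common approved alternative of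
the winning group. -/
def ppWinner {n : ℕ} (lam : Fin n → ℝ) (Ap : Profile n) (Ct : Finset ℕ) : ℕ :=
  sInf {c : ℕ | c ∈ Ct ∧ ∀ i ∈ ppGroup lam Ap Ct, c ∈ Ap i}

/-- Voter loads at the start of round `t` under Perpetual Phragmén. -/
def ppLoad {n : ℕ} (C : ℕ → Finset ℕ) (A : ℕ → Profile n) : ℕ → Fin n → ℝ
  | 0 => fun _ => 0
  | t + 1 => fun i =>
      let lam := ppLoad C A t
      if i ∈ ppGroup lam (A t) (C t) then ppPhi lam (ppGroup lam (A t) (C t))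
      else lam i

/-- Perpetual Phragmén as an online voting rule. -/
def ppRule {n : ℕ} (C : ℕ → Finset ℕ) : VRule n :=
  fun t A => ppWinner (ppLoad C A t) (A t) (C t)

end

noncomputable section

lemma sum_range_two_pow_lt (a : ℕ) : ∑ i ∈ Finset.range a, 2 ^ i < 2 ^ a := by
  induction a with
  | zero => simp
  | succ a ih =>
    rw [Finset.sum_range_succ, pow_succ]
    omega

lemma testBit_sum_two_pow (S : Finset ℕ) (k : ℕ) :
    (∑ i ∈ S, 2 ^ i).testBit k = true ↔ k ∈ S := by
  induction S using Finset.induction_on_max with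
  | empty => simp
  | insert a s ha ih =>
    have has : a ∉ s := fun h => lt_irrefl a (ha a h)
    have hm : ∑ i ∈ s, 2 ^ i < 2 ^ a := by
      calc ∑ i ∈ s, 2 ^ i ≤ ∑ i ∈ Finset.range a, 2 ^ i :=
            Finset.sum_le_sum_of_subset (fun b hb => Finset.mem_range.2 (ha b hb))
        _ < 2 ^ a := sum_range_two_pow_lt a
    rw [Finset.sum_insert has]
    rcases lt_trichotomy k a with hk | hk | hk
    · rw [Nat.testBit_two_pow_add_gt hk, ih]
      simp [Finset.mem_insert, hk.ne]
    · subst hk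
      rw [Nat.testBit_two_pow_add_eq, Nat.testBit_lt_two_pow hm]
      simp
    · have h1 : 2 ^ a + ∑ i ∈ s, 2 ^ i < 2 ^ (a + 1) := by
        rw [pow_succ]; omega
      have h2 : 2 ^ a + ∑ i ∈ s, 2 ^ i < 2 ^ k :=
        h1.trans_le (Nat.pow_le_pow_right (by norm_num) hk)
      rw [Nat.testBit_lt_two_pow h2]
      have : k ∉ s := fun h => absurd (ha k h) (not_lt.2 hk.le)
      simp [Finset.mem_insert, hk.ne', this]

lemma ppEncode_testBit {n : ℕ} (S : Finset (Fin n)) (i : Fin n) :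
    (ppEncode S).testBit (i : ℕ) = true ↔ i ∈ S := by
  have : ppEncode S = ∑ k ∈ S.image (Fin.val), 2 ^ k := by
    rw [Finset.sum_image (fun a ha b hb h => Fin.val_injective h)]
    rfl
  rw [this, testBit_sum_two_pow]
  simp [Finset.mem_image, Fin.val_inj]

lemma ppDecode {n : ℕ} (S : Finset (Fin n)) :
    (Finset.univ.filter fun i : Fin n => (ppEncode S).testBit (i : ℕ)) = S := by
  ext i
  simp [Finset.mem_filter, ppEncode_testBit]

lemma ppGroup_def {n : ℕ} (lam : Fin n → ℝ) (Ap : Profile n) (Ct : Finset ℕ) :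
    ppGroup lam Ap Ct =
      (if h : ((Finset.univ.filter fun S : Finset (Fin n) =>
            S.Nonempty ∧ ∃ c ∈ Ct, ∀ i ∈ S, c ∈ Ap i).filter fun S =>
              ∀ S' ∈ (Finset.univ.filter fun S : Finset (Fin n) =>
                S.Nonempty ∧ ∃ c ∈ Ct, ∀ i ∈ S, c ∈ Ap i), ppPhi lam S ≤ ppPhi lam S').Nonempty
        then
          Finset.univ.filter fun i : Fin n =>
            ((((Finset.univ.filter fun S : Finset (Fin n) =>
              S.Nonempty ∧ ∃ c ∈ Ct, ∀ i ∈ S, c ∈ Ap i).filter fun S =>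
                ∀ S' ∈ (Finset.univ.filter fun S : Finset (Fin n) =>
                  S.Nonempty ∧ ∃ c ∈ Ct, ∀ i ∈ S, c ∈ Ap i), ppPhi lam S ≤ ppPhi lam S').image
                    ppEncode).min' (h.image _)).testBit (i : ℕ)
        else ∅) := rfl

/-- The winning group is a minimizing candidate group (when candidates exist). -/
lemma ppGroup_mem_mins {n : ℕ} (lam : Fin n → ℝ) (Ap : Profile n) (Ct : Finset ℕ)
    (cands : Finset (Finset (Fin n)))
    (hc : cands = Finset.univ.filter fun S : Finset (Fin n) =>
      S.Nonempty ∧ ∃ c ∈ Ct, ∀ i ∈ S, c ∈ Ap i)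
    (mins : Finset (Finset (Fin n)))
    (hm : mins = cands.filter fun S => ∀ S' ∈ cands, ppPhi lam S ≤ ppPhi lam S')
    (hne : mins.Nonempty) :
    ppGroup lam Ap Ct ∈ mins ∧
      ppEncode (ppGroup lam Ap Ct) = (mins.image ppEncode).min' (hne.image _) := by
  subst hc; subst hm
  rw [ppGroup_def, dif_pos hne]
  have hmm := Finset.min'_mem _ (hne.image ppEncode)
  obtain ⟨S0, hS0, hS0e⟩ := Finset.mem_image.1 hmm
  rw [← hS0e, ppDecode]
  exact ⟨hS0, rfl⟩

lemma ppGroup_eq_empty {n : ℕ} (lam : Fin n → ℝ) (Ap : Profile n) (Ct : Finset ℕ)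
    (hne : ¬ ((Finset.univ.filter fun S : Finset (Fin n) =>
        S.Nonempty ∧ ∃ c ∈ Ct, ∀ i ∈ S, c ∈ Ap i).filter fun S =>
          ∀ S' ∈ (Finset.univ.filter fun S : Finset (Fin n) =>
            S.Nonempty ∧ ∃ c ∈ Ct, ∀ i ∈ S, c ∈ Ap i), ppPhi lam S ≤ ppPhi lam S').Nonempty) :
    ppGroup lam Ap Ct = ∅ := by
  rw [ppGroup_def, dif_neg hne]

lemma ppLoad_congr {n : ℕ} (C : ℕ → Finset ℕ) (A B : ℕ → Profile n) :
    ∀ t : ℕ, (∀ s, s < t → A s = B s) → ppLoad C A t = ppLoad C B t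
  | 0, _ => rfl
  | t + 1, h => by
    have ih : ppLoad C A t = ppLoad C B t :=
      ppLoad_congr C A B t (fun s hs => h s (hs.trans (Nat.lt_succ_self t)))
    have hAB : A t = B t := h t (Nat.lt_succ_self t)
    funext i
    simp only [ppLoad, ih, hAB]

/-- Key one-round lemma: erasing a non-winning alternative from one voter's
approval set changes neither the winning group nor the winner. -/
lemma ppWinner_erase {n : ℕ} (lam : Fin n → ℝ) (Ap : Profile n) (Ct : Finset ℕ)
    (i : Fin n) (d : ℕ) (hd : d ≠ ppWinner lam Ap Ct) :
    ppWinner lam (Function.update Ap i ((Ap i).erase d)) Ct = ppWinner lam Ap Ct := by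
  set Ap' : Profile n := Function.update Ap i ((Ap i).erase d) with hAp'
  have hsub : ∀ j : Fin n, Ap' j ⊆ Ap j := by
    intro j
    by_cases hj : j = i
    · subst hj; rw [hAp', Function.update_self]; exact Finset.erase_subset _ _
    · rw [hAp', Function.update_of_ne hj]
  set cands : Finset (Finset (Fin n)) :=
    Finset.univ.filter fun S : Finset (Fin n) =>
      S.Nonempty ∧ ∃ c ∈ Ct, ∀ i ∈ S, c ∈ Ap i with hcands
  set cands' : Finset (Finset (Fin n)) :=
    Finset.univ.filter fun S : Finset (Fin n) =>
      S.Nonempty ∧ ∃ c ∈ Ct, ∀ i ∈ S, c ∈ Ap' i with hcands'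
  have hcsub : cands' ⊆ cands := by
    intro S hS
    rw [hcands'] at hS
    rw [hcands]
    obtain ⟨_, hSne, c, hcCt, hc⟩ := Finset.mem_filter.1 hS
    exact Finset.mem_filter.2 ⟨Finset.mem_univ _, hSne, c, hcCt, fun j hj => hsub j (hc j hj)⟩
  set mins : Finset (Finset (Fin n)) :=
    cands.filter fun S => ∀ S' ∈ cands, ppPhi lam S ≤ ppPhi lam S' with hmins
  set mins' : Finset (Finset (Fin n)) :=
    cands'.filter fun S => ∀ S' ∈ cands', ppPhi lam S ≤ ppPhi lam S' with hmins'
  by_cases hcne : cands.Nonempty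
  · -- candidates exist
    have hmne : mins.Nonempty := by
      obtain ⟨S0, hS0, hmin⟩ := Finset.exists_min_image cands (ppPhi lam) hcne
      exact ⟨S0, by rw [hmins]; exact Finset.mem_filter.2 ⟨hS0, hmin⟩⟩
    obtain ⟨hGmem, hGenc⟩ := ppGroup_mem_mins lam Ap Ct cands hcands mins hmins hmne
    set G := ppGroup lam Ap Ct with hG
    have hGc : G ∈ cands := Finset.mem_of_mem_filter _ (hmins ▸ hGmem)
    have hGmin : ∀ S' ∈ cands, ppPhi lam G ≤ ppPhi lam S' :=
      (Finset.mem_filter.1 (hmins ▸ hGmem)).2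
    obtain ⟨_, hGne, c0, hc0Ct, hc0⟩ := Finset.mem_filter.1 (hcands ▸ hGc)
    -- the winner for Ap
    have hWne : {c : ℕ | c ∈ Ct ∧ ∀ j ∈ G, c ∈ Ap j}.Nonempty := ⟨c0, hc0Ct, hc0⟩
    set w := ppWinner lam Ap Ct with hw
    have hwmem : w ∈ {c : ℕ | c ∈ Ct ∧ ∀ j ∈ G, c ∈ Ap j} := by
      rw [hw, ppWinner, ← hG]; exact Nat.sInf_mem hWne
    obtain ⟨hwCt, hwAp⟩ := hwmem
    -- w is still approved by all of G under Ap'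
    have hwAp' : ∀ j ∈ G, w ∈ Ap' j := by
      intro j hj
      by_cases hji : j = i
      · subst hji
        rw [hAp', Function.update_self]
        exact Finset.mem_erase.2 ⟨(Ne.symm hd), hwAp j hj⟩
      · rw [hAp', Function.update_of_ne hji]; exact hwAp j hj
    have hGc' : G ∈ cands' := by
      rw [hcands']
      exact Finset.mem_filter.2 ⟨Finset.mem_univ _, hGne, w, hwCt, hwAp'⟩
    have hGmem' : G ∈ mins' := by
      rw [hmins']
      exact Finset.mem_filter.2 ⟨hGc', fun S' hS' => hGmin S' (hcsub hS')⟩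
    have hmne' : mins'.Nonempty := ⟨G, hGmem'⟩
    have hmsub : mins' ⊆ mins := by
      intro S hS
      rw [hmins'] at hS
      obtain ⟨hSc', hSmin'⟩ := Finset.mem_filter.1 hS
      rw [hmins]
      refine Finset.mem_filter.2 ⟨hcsub hSc', fun S'' hS'' => ?_⟩
      exact le_trans (hSmin' G hGc') (hGmin S'' hS'')
    -- the two encodings coincide
    obtain ⟨hG'mem, hG'enc⟩ := ppGroup_mem_mins lam Ap' Ct cands' hcands' mins' hmins' hmne'
    have hencle : (mins'.image ppEncode).min' (hmne'.image _) ≤ ppEncode G :=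
      Finset.min'_le _ _ (Finset.mem_image_of_mem _ hGmem')
    have hencge : (mins.image ppEncode).min' (hmne.image _) ≤
        (mins'.image ppEncode).min' (hmne'.image _) :=
      Finset.min'_subset _ (Finset.image_subset_image hmsub)
    have henceq : ppEncode (ppGroup lam Ap' Ct) = ppEncode G := by
      rw [hG'enc]
      exact le_antisymm hencle (hGenc.le.trans hencge)
    have hGeq : ppGroup lam Ap' Ct = G := by
      have := congrArg (fun m : ℕ => Finset.univ.filter fun i : Fin n => m.testBit (i : ℕ)) henceq
      simpa only [ppDecode] using this
    -- winners coincide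
    rw [ppWinner, hGeq]
    have hW'sub : {c : ℕ | c ∈ Ct ∧ ∀ j ∈ G, c ∈ Ap' j} ⊆
        {c : ℕ | c ∈ Ct ∧ ∀ j ∈ G, c ∈ Ap j} := by
      intro c hc
      exact ⟨hc.1, fun j hj => hsub j (hc.2 j hj)⟩
    have hwW' : w ∈ {c : ℕ | c ∈ Ct ∧ ∀ j ∈ G, c ∈ Ap' j} := ⟨hwCt, hwAp'⟩
    refine le_antisymm (Nat.sInf_le hwW') ?_
    have : sInf {c : ℕ | c ∈ Ct ∧ ∀ j ∈ G, c ∈ Ap' j} ∈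
        {c : ℕ | c ∈ Ct ∧ ∀ j ∈ G, c ∈ Ap j} :=
      hW'sub (Nat.sInf_mem ⟨w, hwW'⟩)
    calc w = sInf {c : ℕ | c ∈ Ct ∧ ∀ j ∈ G, c ∈ Ap j} := by rw [hw, ppWinner, ← hG]
      _ ≤ _ := Nat.sInf_le this
  · -- no candidate groups: both groups are empty
    have hcne' : ¬ cands'.Nonempty := fun h => hcne (h.mono hcsub)
    have hmn : ¬ mins.Nonempty := fun ⟨S, hS⟩ =>
      hcne ⟨S, Finset.mem_of_mem_filter _ (hmins ▸ hS)⟩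
    have hmn' : ¬ mins'.Nonempty := fun ⟨S, hS⟩ =>
      hcne' ⟨S, Finset.mem_of_mem_filter _ (hmins' ▸ hS)⟩
    have h1 : ppGroup lam Ap Ct = ∅ := ppGroup_eq_empty lam Ap Ct (by
      rw [hmins, hcands] at hmn; exact hmn)
    have h2 : ppGroup lam Ap' Ct = ∅ := ppGroup_eq_empty lam Ap' Ct (by
      rw [hmins', hcands'] at hmn'; exact hmn')
    rw [ppWinner, ppWinner, h1, h2]
    simp

end

/-- Perpetual Phragmén with lexicographic tie-breaking satisfies
OIIA. -/
theorem perpetualPhragmen_oiia {n : ℕ} (C : ℕ → Finset ℕ) :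
    OIIA (ppRule (n := n) C) := by
  intro A t i d hd
  have hload : ppLoad C (updateRound A t i ((A t i).erase d)) t = ppLoad C A t := by
    apply ppLoad_congr
    intro s hs
    simp [updateRound, hs.ne]
  have hAt : updateRound A t i ((A t i).erase d) t =
      Function.update (A t) i ((A t i).erase d) := by
    simp [updateRound]
  show ppWinner (ppLoad C (updateRound A t i ((A t i).erase d)) t)
      (updateRound A t i ((A t i).erase d) t) (C t) = ppRule C t A
  rw [hload, hAt]
  exact ppWinner_erase (ppLoad C A t) (A t) (C t) i d hd
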